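/- arXiv:2104.13967 — 2 statements merged into one kernel-verified Lean document; each statement's English description precedes it below -/
import Mathlib

section
/- For any absolutely continuous function w : [0,T] → ℝ and any γ ∈ (0,1), the Caputo fractional derivative satisfies the coercivity estimate w(t) · D_t^γ w(t) ≥ (1/2) · D_t^γ (w²)(t) for almost every t ∈ (0,T). -/
open MeasureTheory Set Filter

/-- Caputo fractional derivative of order `γ ∈ (0,1)` of a real-valued function,
expressed through its a.e. derivative `w'`. -/
noncomputable def caputoDeriv (γ : ℝ) (w' : ℝ → ℝ) (t : ℝ) : ℝ :=
  (Real.Gamma (1 - γ))⁻¹ * ∫ s in (0:ℝ)..t, (t - s) ^ (-γ) * w' s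

lemma kernel_intble {γ t s : ℝ} (hγ0 : 0 < γ) (hγ1 : γ < 1) (hst : s < t) :
    IntegrableOn (fun u => (t - u) ^ (-γ)) (Ioo s t) := by
  have h1 : IntervalIntegrable (fun x : ℝ => x ^ (-γ)) volume 0 (t - s) :=
    intervalIntegral.intervalIntegrable_rpow' (by linarith)
  have h2 := h1.comp_sub_left t
  rw [intervalIntegrable_iff] at h2
  have : Set.uIoc (t - 0) (t - (t - s)) = Set.Ioc s t := by
    rw [Set.uIoc_of_ge (by linarith)]; norm_num
  rw [this] at h2
  exact h2.mono_set Ioo_subset_Ioc_self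

lemma kernel_integral {γ t s : ℝ} (hγ0 : 0 < γ) (hγ1 : γ < 1) (hst : s < t) :
    ∫ u in Ioo s t, (t - u) ^ (-γ) = (t - s) ^ (1 - γ) / (1 - γ) := by
  have h0 : (∫ u in s..t, (t - u) ^ (-γ)) = ∫ x in (t - t)..(t - s), x ^ (-γ) :=
    intervalIntegral.integral_comp_sub_left (fun x : ℝ => x ^ (-γ)) t
  rw [intervalIntegral.integral_of_le hst.le, integral_Ioc_eq_integral_Ioo] at h0
  rw [h0]
  have : (t - t) = (0:ℝ) := by ring
  rw [this, integral_rpow (Or.inl (by linarith))]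
  rw [Real.zero_rpow (by linarith)]
  ring_nf

lemma kernel_ftc {γ t m : ℝ} (hγ0 : 0 < γ) (h0m : 0 < m) (hmt : m < t) :
    (t - m) ^ (-γ) = t ^ (-γ) + γ * ∫ u in Ioo 0 m, (t - u) ^ (-γ - 1) := by
  have h0 : (∫ u in (0:ℝ)..m, (t - u) ^ (-γ - 1)) = ∫ x in (t - m)..(t - 0), x ^ (-γ - 1) :=
    intervalIntegral.integral_comp_sub_left (fun x : ℝ => x ^ (-γ - 1)) t
  have hm : (0:ℝ) ∉ Set.uIcc (t - m) (t - 0) := by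
    rw [Set.uIcc_of_le (by linarith)]
    intro h; simp at h; linarith [h.1]
  rw [intervalIntegral.integral_of_le h0m.le, integral_Ioc_eq_integral_Ioo] at h0
  rw [h0, integral_rpow (Or.inr ⟨by intro h; linarith, hm⟩)]
  have e1 : -γ - 1 + 1 = -γ := by ring
  rw [e1]
  have ht : (t:ℝ) - 0 = t := by ring
  rw [ht]
  have hne : γ ≠ 0 := hγ0.ne'
  have : γ * ((t ^ (-γ) - (t - m) ^ (-γ)) / -γ) = (t - m) ^ (-γ) - t ^ (-γ) := by
    rw [div_neg, mul_neg, ← mul_div_assoc, mul_div_cancel_left₀ _ hne]; ring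
  linarith

lemma sq_identity (a b : ℝ) (f : ℝ → ℝ) (hf : Measurable f)
    (hfi : IntegrableOn f (Ioo a b)) :
    ∫ s in Ioo a b, f s * (∫ r in Ioo s b, f r) = (1/2) * (∫ s in Ioo a b, f s)^2 := by
  set ν := volume.restrict (Ioo a b) with hν
  have hP : Integrable (fun p : ℝ × ℝ => f p.1 * f p.2) (ν.prod ν) := hfi.mul_prod hfi
  have hF1meas : Measurable (fun p : ℝ × ℝ => if p.1 < p.2 then f p.1 * f p.2 else 0) := by
    exact Measurable.ite (measurableSet_lt measurable_fst measurable_snd)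
      ((hf.comp measurable_fst).mul (hf.comp measurable_snd)) measurable_const
  have hF2meas : Measurable (fun p : ℝ × ℝ => if p.2 < p.1 then f p.1 * f p.2 else 0) := by
    exact Measurable.ite (measurableSet_lt measurable_snd measurable_fst)
      ((hf.comp measurable_fst).mul (hf.comp measurable_snd)) measurable_const
  have hF1 : Integrable (fun p : ℝ × ℝ => if p.1 < p.2 then f p.1 * f p.2 else 0) (ν.prod ν) := by
    refine hP.mono hF1meas.aestronglyMeasurable ?_
    filter_upwards with p
    by_cases h : p.1 < p.2 <;> simp [h] <;> positivity
  have hF2 : Integrable (fun p : ℝ × ℝ => if p.2 < p.1 then f p.1 * f p.2 else 0) (ν.prod ν) := by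
    refine hP.mono hF2meas.aestronglyMeasurable ?_
    filter_upwards with p
    by_cases h : p.2 < p.1 <;> simp [h] <;> positivity
  -- diagonal is null
  have hdiag : (ν.prod ν) {p : ℝ × ℝ | p.1 = p.2} = 0 := by
    rw [MeasureTheory.Measure.prod_apply (measurableSet_eq_fun measurable_fst measurable_snd)]
    have : ∀ x : ℝ, ν (Prod.mk x ⁻¹' {p : ℝ × ℝ | p.1 = p.2}) = 0 := by
      intro x
      have : Prod.mk x ⁻¹' {p : ℝ × ℝ | p.1 = p.2} = {x} := by
        ext y; simp [eq_comm]
      rw [this, hν, Measure.restrict_apply (measurableSet_singleton x)]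
      exact measure_mono_null Set.inter_subset_left (measure_singleton x)
    simp [this]
  have hsplit : (fun p : ℝ × ℝ => f p.1 * f p.2) =ᵐ[ν.prod ν]
      (fun p => (if p.1 < p.2 then f p.1 * f p.2 else 0)
        + (if p.2 < p.1 then f p.1 * f p.2 else 0)) := by
    rw [Filter.EventuallyEq, ae_iff]
    refine measure_mono_null ?_ hdiag
    intro p hp
    simp only [mem_setOf_eq] at hp ⊢
    by_contra hne
    rcases lt_trichotomy p.1 p.2 with h | h | h
    · exact hp (by simp [h, not_lt_of_gt h])
    · exact hne h
    · exact hp (by simp [h, not_lt_of_gt h])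
  have e0 : ∫ p, f p.1 * f p.2 ∂(ν.prod ν) = (∫ s, f s ∂ν) * (∫ s, f s ∂ν) :=
    integral_prod_mul f f
  have esum : ∫ p, f p.1 * f p.2 ∂(ν.prod ν)
      = (∫ p, (if p.1 < p.2 then f p.1 * f p.2 else 0) ∂(ν.prod ν))
        + ∫ p, (if p.2 < p.1 then f p.1 * f p.2 else 0) ∂(ν.prod ν) := by
    rw [integral_congr_ae hsplit, integral_add hF1 hF2]
  have eswap : (∫ p, (if p.2 < p.1 then f p.1 * f p.2 else 0) ∂(ν.prod ν))
      = ∫ p, (if p.1 < p.2 then f p.1 * f p.2 else 0) ∂(ν.prod ν) := by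
    have hfun : (fun p : ℝ × ℝ => if p.2 < p.1 then f p.1 * f p.2 else 0)
        = fun p : ℝ × ℝ => (fun q : ℝ × ℝ => if q.1 < q.2 then f q.1 * f q.2 else 0) p.swap := by
      funext p
      by_cases h : p.2 < p.1 <;> simp [Prod.swap, h, mul_comm]
    rw [hfun]
    exact integral_prod_swap (fun q : ℝ × ℝ => if q.1 < q.2 then f q.1 * f q.2 else 0)
  have eF1 : (∫ p, (if p.1 < p.2 then f p.1 * f p.2 else 0) ∂(ν.prod ν))
      = ∫ s, f s * (∫ r in Ioo s b, f r) ∂ν := by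
    rw [integral_prod _ hF1]
    refine integral_congr_ae ?_
    rw [hν]
    filter_upwards [ae_restrict_mem measurableSet_Ioo] with s hs
    have hind : (fun r => if s < r then f s * f r else 0)
        = (Ioi s).indicator (fun r => f s * f r) := by
      funext r
      by_cases h : s < r <;> simp [indicator, h, mem_Ioi]
    calc ∫ r, (if s < r then f s * f r else 0) ∂ν
        = ∫ r in Ioi s, f s * f r ∂ν := by rw [hind, integral_indicator measurableSet_Ioi]
      _ = ∫ r in Ioo s b, f s * f r := by
          rw [hν, Measure.restrict_restrict measurableSet_Ioi]
          have hset : Ioi s ∩ Ioo a b = Ioo s b := by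
            ext r
            simp only [mem_inter_iff, mem_Ioi, mem_Ioo]
            constructor
            · rintro ⟨h1, _, h3⟩; exact ⟨h1, h3⟩
            · rintro ⟨h1, h2⟩; exact ⟨h1, lt_trans hs.1 h1, h2⟩
          rw [hset]
      _ = f s * ∫ r in Ioo s b, f r := integral_const_mul _ _
  have hgoal : (∫ s, f s ∂ν) * (∫ s, f s ∂ν)
      = 2 * ∫ s, f s * (∫ r in Ioo s b, f r) ∂ν := by
    rw [← eF1, e0.symm, esum, eswap]; ring
  rw [pow_two]
  linarith [hgoal]

lemma kernel_intble' {γ T s : ℝ} (hγ0 : 0 < γ) (hγ1 : γ < 1) (hst : s < T) :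
    IntegrableOn (fun x => (x - s) ^ (-γ)) (Ioo s T) := by
  have h1 : IntervalIntegrable (fun x : ℝ => x ^ (-γ)) volume 0 (T - s) :=
    intervalIntegral.intervalIntegrable_rpow' (by linarith)
  have h2 := h1.comp_sub_right s
  rw [intervalIntegrable_iff] at h2
  have he : Set.uIoc (0 + s) (T - s + s) = Set.Ioc s T := by
    rw [Set.uIoc_of_le (by linarith)]; norm_num
  rw [he] at h2
  exact h2.mono_set Ioo_subset_Ioc_self

lemma kernel_integral' {γ T s : ℝ} (hγ0 : 0 < γ) (hγ1 : γ < 1) (hst : s < T) :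
    ∫ x in Ioo s T, (x - s) ^ (-γ) = (T - s) ^ (1 - γ) / (1 - γ) := by
  have h0 : (∫ x in s..T, (x - s) ^ (-γ)) = ∫ x in (s - s)..(T - s), x ^ (-γ) :=
    intervalIntegral.integral_comp_sub_right (fun x : ℝ => x ^ (-γ)) s
  rw [intervalIntegral.integral_of_le hst.le, integral_Ioc_eq_integral_Ioo] at h0
  rw [h0, show s - s = (0:ℝ) by ring, integral_rpow (Or.inl (by linarith)),
    Real.zero_rpow (by intro h; linarith)]
  ring_nf

lemma ae_integrable (T γ : ℝ) (hT : 0 < T) (hγ0 : 0 < γ) (hγ1 : γ < 1) (g : ℝ → ℝ)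
    (hg : Measurable g) (hgi : IntegrableOn g (Ioo 0 T)) :
    ∀ᵐ t ∂(volume.restrict (Ioo 0 T)),
      IntegrableOn (fun s => (t - s) ^ (-γ) * |g s|) (Ioo 0 t) := by
  set ν := volume.restrict (Ioo 0 T) with hν
  set H : ℝ → ℝ → ENNReal := fun t s =>
    if s < t then ENNReal.ofReal ((t - s) ^ (-γ) * |g s|) else 0 with hH
  have hHmeas : Measurable (Function.uncurry H) := by
    refine Measurable.ite (measurableSet_lt measurable_snd measurable_fst) ?_ measurable_const
    apply ENNReal.measurable_ofReal.comp
    fun_prop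
  have hinner_meas : Measurable fun t => ∫⁻ s, H t s ∂ν :=
    Measurable.lintegral_prod_right hHmeas
  set C : ENNReal := ENNReal.ofReal (T ^ (1 - γ) / (1 - γ)) with hC
  have key : (∫⁻ t, (∫⁻ s, H t s ∂ν) ∂ν) ≠ ⊤ := by
    rw [lintegral_lintegral_swap hHmeas.aemeasurable]
    refine ne_of_lt ?_
    have hbound : ∀ s ∈ Ioo (0:ℝ) T, (∫⁻ t, H t s ∂ν) ≤ C * ENNReal.ofReal |g s| := by
      intro s hs
      have hind : (fun t => H t s)
          = (Ioi s).indicator (fun t => ENNReal.ofReal ((t - s) ^ (-γ) * |g s|)) := by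
        funext t; by_cases hx : s < t <;> simp [hH, indicator, hx, mem_Ioi]
      have hset : Ioi s ∩ Ioo 0 T = Ioo s T := by
        ext r
        simp only [mem_inter_iff, mem_Ioi, mem_Ioo]
        exact ⟨fun ⟨h1, _, h3⟩ => ⟨h1, h3⟩, fun ⟨h1, h2⟩ => ⟨h1, lt_trans hs.1 h1, h2⟩⟩
      rw [hind, lintegral_indicator measurableSet_Ioi, hν,
        Measure.restrict_restrict measurableSet_Ioi, hset]
      have hsplit : (∫⁻ t in Ioo s T, ENNReal.ofReal ((t - s) ^ (-γ) * |g s|))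
          = (∫⁻ t in Ioo s T, ENNReal.ofReal ((t - s) ^ (-γ))) * ENNReal.ofReal |g s| := by
        rw [← lintegral_mul_const _ (by fun_prop : Measurable fun t : ℝ => ENNReal.ofReal ((t - s) ^ (-γ)))]
        refine setLIntegral_congr_fun measurableSet_Ioo ?_
        intro x hx
        beta_reduce
        rw [← ENNReal.ofReal_mul (Real.rpow_nonneg (by linarith [hx.1]) _)]
      rw [hsplit]
      have hval : (∫⁻ t in Ioo s T, ENNReal.ofReal ((t - s) ^ (-γ)))
          = ENNReal.ofReal ((T - s) ^ (1 - γ) / (1 - γ)) := by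
        rw [← ofReal_integral_eq_lintegral_ofReal (kernel_intble' hγ0 hγ1 hs.2)]
        · rw [kernel_integral' hγ0 hγ1 hs.2]
        · rw [Filter.EventuallyLE, ae_restrict_iff' measurableSet_Ioo]
          filter_upwards with x hx
          simp only [Pi.zero_apply]
          exact Real.rpow_nonneg (by linarith [hx.1]) _
      rw [hval]
      refine mul_le_mul_left (ENNReal.ofReal_le_ofReal ?_) _
      exact div_le_div_of_nonneg_right
        (Real.rpow_le_rpow (by linarith [hs.2]) (by linarith [hs.1]) (by linarith)) (by linarith)
    calc (∫⁻ s, ∫⁻ t, H t s ∂ν ∂ν) ≤ ∫⁻ s, C * ENNReal.ofReal |g s| ∂ν := by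
          refine lintegral_mono_ae ?_
          rw [hν, ae_restrict_iff' measurableSet_Ioo]
          filter_upwards with s hs
          rw [← hν]
          exact hbound s hs
      _ = C * ∫⁻ s, ENNReal.ofReal |g s| ∂ν := lintegral_const_mul C (by fun_prop)
      _ < ⊤ := by
          refine ENNReal.mul_lt_top (by simp [hC]) ?_
          have habs : Integrable (fun s => |g s|) ν := hgi.abs
          have := (hasFiniteIntegral_iff_ofReal
            (Filter.Eventually.of_forall fun s => abs_nonneg (g s))).1 habs.hasFiniteIntegral
          exact this
  have hae := ae_lt_top hinner_meas key
  rw [hν, ae_restrict_iff' measurableSet_Ioo] at hae ⊢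
  filter_upwards [hae] with t hlt htmem
  have hfin : (∫⁻ s in Ioo 0 t, ENNReal.ofReal ((t - s) ^ (-γ) * |g s|)) < ⊤ := by
    have hind : (fun s => H t s)
        = (Iio t).indicator (fun s => ENNReal.ofReal ((t - s) ^ (-γ) * |g s|)) := by
      funext s; by_cases hx : s < t <;> simp [hH, indicator, hx, mem_Iio]
    have hset : Iio t ∩ Ioo 0 T = Ioo 0 t := by
      ext r
      simp only [mem_inter_iff, mem_Iio, mem_Ioo]
      exact ⟨fun ⟨h1, h2, _⟩ => ⟨h2, h1⟩, fun ⟨h1, h2⟩ => ⟨h2, h1, lt_trans h2 htmem.2⟩⟩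
    have := hlt htmem
    rwa [hind, lintegral_indicator measurableSet_Iio,
      Measure.restrict_restrict measurableSet_Iio, hset] at this
  constructor
  · exact ((by fun_prop : Measurable fun s => (t - s) ^ (-γ) * |g s|)).aestronglyMeasurable.restrict
  · refine (hasFiniteIntegral_iff_ofReal ?_).2 hfin
    rw [Filter.EventuallyLE, ae_restrict_iff' measurableSet_Ioo]
    filter_upwards with s hs
    simp only [Pi.zero_apply]
    exact mul_nonneg (Real.rpow_nonneg (by linarith [hs.2]) _) (abs_nonneg _)
set_option maxHeartbeats 1000000 in

lemma core_nonneg {t γ : ℝ} (ht : 0 < t) (hγ0 : 0 < γ) (hγ1 : γ < 1) (g : ℝ → ℝ)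
    (hg : Measurable g)
    (hkg : IntegrableOn (fun s => (t - s) ^ (-γ) * |g s|) (Ioo 0 t)) :
    0 ≤ ∫ s in Ioo 0 t, (t - s) ^ (-γ) * g s * (∫ r in Ioo s t, g r) := by
  set ν := volume.restrict (Ioo 0 t) with hν
  set k : ℝ → ℝ := fun s => (t - s) ^ (-γ) with hk
  set φ : ℝ → ℝ := fun u => (t - u) ^ (-γ - 1) with hφ
  set h : ℝ → ℝ := fun s => ∫ r in Ioo s t, g r with hh
  have hkmeas : Measurable k := by fun_prop
  have hφmeas : Measurable φ := by fun_prop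
  -- g is integrable on (0,t)
  have hgi : IntegrableOn g (Ioo 0 t) := by
    refine Integrable.mono' (hkg.const_mul (t ^ γ)) hg.aestronglyMeasurable ?_
    rw [ae_restrict_iff' measurableSet_Ioo]
    filter_upwards with s hs
    have h1 : t ^ (-γ) ≤ k s :=
      Real.rpow_le_rpow_of_nonpos (by linarith [hs.2]) (by linarith [hs.1]) (by linarith)
    have h2 : t ^ γ * t ^ (-γ) = 1 := by
      rw [← Real.rpow_add ht]; simp
    have h3 : (0:ℝ) < t ^ γ := Real.rpow_pos_of_pos ht γ
    calc ‖g s‖ = 1 * |g s| := by rw [Real.norm_eq_abs, one_mul]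
      _ ≤ (t ^ γ * k s) * |g s| := by
          refine mul_le_mul_of_nonneg_right ?_ (abs_nonneg _)
          calc (1:ℝ) = t ^ γ * t ^ (-γ) := h2.symm
            _ ≤ t ^ γ * k s := mul_le_mul_of_nonneg_left h1 h3.le
      _ = t ^ γ * (k s * |g s|) := by ring
  set C0 : ℝ := ∫ r in Ioo 0 t, |g r| with hC0def
  have hC0nonneg : 0 ≤ C0 := integral_nonneg fun _ => abs_nonneg _
  have hC0 : ∀ s : ℝ, 0 ≤ s → |h s| ≤ C0 := by
    intro s hs
    have h1 : |h s| ≤ ∫ r in Ioo s t, |g r| := by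
      simpa [Real.norm_eq_abs] using
        norm_integral_le_integral_norm (μ := volume.restrict (Ioo s t)) g
    refine h1.trans ?_
    refine setIntegral_mono_set hgi.abs ?_ ?_
    · exact Filter.Eventually.of_forall fun r => abs_nonneg _
    · exact (Ioo_subset_Ioo_left hs).eventuallyLE
  -- continuity (hence measurability) of h
  have hIccg : IntegrableOn g (Icc 0 t) := by rw [integrableOn_Icc_iff_integrableOn_Ioo]; exact hgi
  have hIccg' : IntegrableOn g (uIcc 0 t) := by rwa [uIcc_of_le ht.le]
  have hi1 : IntervalIntegrable g volume 0 t :=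
    (intervalIntegrable_iff_integrableOn_Ioc_of_le ht.le).2 (hIccg.mono_set Ioc_subset_Icc_self)
  have hcont : ContinuousOn h (Icc 0 t) := by
    have hprim := intervalIntegral.continuousOn_primitive_interval (a := 0) (b := t) hIccg'
    rw [uIcc_of_le ht.le] at hprim
    refine ContinuousOn.congr ((continuousOn_const (c := ∫ r in (0:ℝ)..t, g r)).sub hprim) ?_
    intro s hs
    have hi2 : IntervalIntegrable g volume 0 s := hi1.mono_set
      (by rw [uIcc_of_le hs.1, uIcc_of_le ht.le]; exact Icc_subset_Icc_right hs.2)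
    show h s = (∫ r in (0:ℝ)..t, g r) - ∫ r in (0:ℝ)..s, g r
    rw [hh]
    show (∫ r in Ioo s t, g r) = _
    rw [← integral_Ioc_eq_integral_Ioo, ← intervalIntegral.integral_of_le hs.2,
      intervalIntegral.integral_interval_sub_left hi1 hi2]
  have hAESMh : AEStronglyMeasurable h ν := by
    rw [hν]
    exact (hcont.mono Ioo_subset_Icc_self).aestronglyMeasurable measurableSet_Ioo
  -- integrability facts
  have hgh : Integrable (fun s => g s * h s) ν := by
    refine Integrable.mono' (hgi.abs.mul_const C0) (hg.aestronglyMeasurable.mul hAESMh) ?_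
    rw [hν, ae_restrict_iff' measurableSet_Ioo]
    filter_upwards with s hs
    rw [Real.norm_eq_abs, abs_mul]
    exact mul_le_mul_of_nonneg_left (hC0 s hs.1.le) (abs_nonneg _)
  have hkgh : Integrable (fun s => k s * (g s * h s)) ν := by
    refine Integrable.mono' (hkg.mul_const C0)
      (hkmeas.aestronglyMeasurable.mul (hg.aestronglyMeasurable.mul hAESMh)) ?_
    rw [hν, ae_restrict_iff' measurableSet_Ioo]
    filter_upwards with s hs
    have hkpos : 0 < k s := Real.rpow_pos_of_pos (by linarith [hs.2]) _
    rw [Real.norm_eq_abs, abs_mul, abs_mul, abs_of_pos hkpos]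
    calc k s * (|g s| * |h s|) ≤ k s * (|g s| * C0) :=
          mul_le_mul_of_nonneg_left
            (mul_le_mul_of_nonneg_left (hC0 s hs.1.le) (abs_nonneg _)) hkpos.le
      _ = k s * |g s| * C0 := by ring
  have hcgh : Integrable (fun s => t ^ (-γ) * (g s * h s)) ν := hgh.const_mul _
  have hdiff : Integrable (fun s => (k s - t ^ (-γ)) * (g s * h s)) ν := by
    refine (hkgh.sub hcgh).congr (Filter.Eventually.of_forall fun s => by simp only [Pi.sub_apply]; ring)
  -- φ-indicator facts
  have hphiind : ∀ s ∈ Ioo 0 t, Integrable (fun u => if u < s then φ u else 0) ν ∧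
      (∫ u, (if u < s then φ u else 0) ∂ν) = ∫ u in Ioo 0 s, φ u := by
    intro s hs
    have hind : (fun u => if u < s then φ u else 0) = (Iio s).indicator φ := by
      funext u; by_cases hx : u < s <;> simp [indicator, hx]
    have hset : Iio s ∩ Ioo 0 t = Ioo 0 s := by
      ext u
      simp only [mem_inter_iff, mem_Iio, mem_Ioo]
      exact ⟨fun ⟨h1, h2, _⟩ => ⟨h2, h1⟩, fun ⟨h1, h2⟩ => ⟨h2, h1, lt_trans h2 hs.2⟩⟩
    have hφint : IntegrableOn φ (Ioo 0 s) := by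
      refine Integrable.mono' (integrable_const ((t - s) ^ (-γ - 1)))
        (hφmeas.aestronglyMeasurable.restrict) ?_
      rw [ae_restrict_iff' measurableSet_Ioo]
      filter_upwards with u hu
      rw [Real.norm_eq_abs, abs_of_nonneg (Real.rpow_nonneg (by linarith [hu.2, hs.2]) _)]
      exact Real.rpow_le_rpow_of_nonpos (by linarith [hs.2]) (by linarith [hu.2]) (by linarith)
    constructor
    · rw [hind, integrable_indicator_iff measurableSet_Iio, IntegrableOn, hν,
        Measure.restrict_restrict measurableSet_Iio, hset]
      exact hφint
    · rw [hind, integral_indicator measurableSet_Iio, hν,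
        Measure.restrict_restrict measurableSet_Iio, hset]
  -- main decomposition
  have hmain : (∫ s, k s * g s * h s ∂ν)
      = (∫ s, t ^ (-γ) * (g s * h s) ∂ν) + ∫ s, (k s - t ^ (-γ)) * (g s * h s) ∂ν := by
    rw [← integral_add hcgh hdiff]
    exact integral_congr_ae (Filter.Eventually.of_forall fun s => by ring)
  have hterm1 : 0 ≤ ∫ s, t ^ (-γ) * (g s * h s) ∂ν := by
    rw [integral_const_mul]
    have hsq := sq_identity 0 t g hg hgi
    rw [← hν] at hsq
    rw [show (fun s => g s * h s) = fun s => g s * (∫ r in Ioo s t, g r) from rfl, hsq]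
    have := Real.rpow_nonneg ht.le (-γ)
    positivity
  -- second term
  set F : ℝ → ℝ → ℝ := fun s u => (if u < s then φ u else 0) * (γ * (g s * h s)) with hF
  have hFmeasp : AEStronglyMeasurable (Function.uncurry F) (ν.prod ν) := by
    refine AEStronglyMeasurable.mul ?_ ?_
    · exact (Measurable.ite (measurableSet_lt measurable_snd measurable_fst)
        (hφmeas.comp measurable_snd) measurable_const).aestronglyMeasurable
    · exact ((hg.aestronglyMeasurable.mul hAESMh).const_mul γ).comp_fst
  have hFint : Integrable (Function.uncurry F) (ν.prod ν) := by
    refine (integrable_prod_iff hFmeasp).2 ⟨?_, ?_⟩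
    · rw [hν, ae_restrict_iff' measurableSet_Ioo]
      filter_upwards with s hs
      rw [← hν]
      simp only [Function.uncurry_apply_pair, hF]
      exact ((hphiind s hs).1.mul_const _)
    · have hAESMn := hFmeasp.norm.integral_prod_right'
      refine Integrable.mono' (hkg.mul_const C0) hAESMn ?_
      rw [hν, ae_restrict_iff' measurableSet_Ioo]
      filter_upwards with s hs
      rw [← hν]
      have hnn : 0 ≤ ∫ u, ‖Function.uncurry F (s, u)‖ ∂ν :=
        integral_nonneg fun u => norm_nonneg _
      rw [Real.norm_eq_abs, abs_of_nonneg hnn]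
      have hcongr : (∫ u, ‖Function.uncurry F (s, u)‖ ∂ν)
          = ∫ u, (if u < s then φ u else 0) * |γ * (g s * h s)| ∂ν := by
        refine integral_congr_ae ?_
        rw [Filter.EventuallyEq, hν, ae_restrict_iff' measurableSet_Ioo]
        filter_upwards with u hu
        simp only [Function.uncurry, hF, Real.norm_eq_abs, abs_mul]
        congr 1
        by_cases hx : u < s
        · simp only [hx, if_true]
          exact abs_of_nonneg (Real.rpow_nonneg (by linarith [hu.2]) _)
        · simp [hx]
      rw [hcongr, integral_mul_const, (hphiind s hs).2]
      have hker := kernel_ftc (m := s) hγ0 hs.1 hs.2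
      have hphi_val : (∫ u in Ioo 0 s, φ u) = (k s - t ^ (-γ)) / γ := by
        simp only [hk, hφ]
        rw [eq_div_iff hγ0.ne', mul_comm]
        linarith [hker]
      rw [hphi_val]
      have hknn : t ^ (-γ) ≤ k s :=
        Real.rpow_le_rpow_of_nonpos (by linarith [hs.2]) (by linarith [hs.1]) (by linarith)
      have htnn : (0:ℝ) ≤ t ^ (-γ) := Real.rpow_nonneg ht.le _
      have hhb := hC0 s hs.1.le
      have habs : |γ * (g s * h s)| = γ * (|g s| * |h s|) := by
        rw [abs_mul, abs_of_pos hγ0, abs_mul]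
      rw [habs]
      have e1 : (k s - t ^ (-γ)) / γ * (γ * (|g s| * |h s|))
          = (k s - t ^ (-γ)) * (|g s| * |h s|) := by
        field_simp
      rw [e1]
      have hkpos : 0 < k s := Real.rpow_pos_of_pos (by linarith [hs.2]) _
      calc (k s - t ^ (-γ)) * (|g s| * |h s|) ≤ k s * (|g s| * |h s|) := by
            apply mul_le_mul_of_nonneg_right (by linarith)
              (mul_nonneg (abs_nonneg _) (abs_nonneg _))
        _ ≤ k s * (|g s| * C0) := by
            apply mul_le_mul_of_nonneg_left
              (mul_le_mul_of_nonneg_left hhb (abs_nonneg _)) hkpos.le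
        _ = k s * |g s| * C0 := by ring
  have hterm2 : 0 ≤ ∫ s, (k s - t ^ (-γ)) * (g s * h s) ∂ν := by
    have hstepA : (∫ s, (k s - t ^ (-γ)) * (g s * h s) ∂ν)
        = ∫ s, (∫ u, F s u ∂ν) ∂ν := by
      refine integral_congr_ae ?_
      rw [Filter.EventuallyEq, hν, ae_restrict_iff' measurableSet_Ioo]
      filter_upwards with s hs
      rw [← hν]
      simp only [hF]
      rw [integral_mul_const, (hphiind s hs).2]
      have hker := kernel_ftc (m := s) hγ0 hs.1 hs.2
      have hphi_val : (∫ u in Ioo 0 s, φ u) = (k s - t ^ (-γ)) / γ := by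
        simp only [hk, hφ]
        rw [eq_div_iff hγ0.ne', mul_comm]
        linarith [hker]
      rw [hphi_val]
      field_simp
    rw [hstepA, integral_integral_swap hFint]
    refine integral_nonneg_of_ae ?_
    rw [Filter.EventuallyLE, hν, ae_restrict_iff' measurableSet_Ioo]
    filter_upwards with u hu
    simp only [Pi.zero_apply]
    rw [← hν]
    have hfun : (fun s => F s u) = (Ioi u).indicator (fun s => (γ * φ u) * (g s * h s)) := by
      funext s
      by_cases hx : u < s
      · simp only [hF, hx, if_true, indicator, mem_Ioi]
        ring
      · simp [hF, hx, indicator, mem_Ioi]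
    have hset : Ioi u ∩ Ioo 0 t = Ioo u t := by
      ext r
      simp only [mem_inter_iff, mem_Ioi, mem_Ioo]
      exact ⟨fun ⟨h1, _, h3⟩ => ⟨h1, h3⟩, fun ⟨h1, h2⟩ => ⟨h1, lt_trans hu.1 h1, h2⟩⟩
    rw [hfun, integral_indicator measurableSet_Ioi, hν,
      Measure.restrict_restrict measurableSet_Ioi, hset, integral_const_mul]
    have hsq := sq_identity u t g hg (hgi.mono_set (Ioo_subset_Ioo_left hu.1.le))
    rw [show (fun s => g s * h s) = fun s => g s * (∫ r in Ioo s t, g r) from rfl, hsq]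
    have hφnn : 0 ≤ φ u := Real.rpow_nonneg (by linarith [hu.2]) _
    positivity
  show 0 ≤ ∫ s, k s * g s * h s ∂ν
  rw [hmain]
  linarith

set_option maxHeartbeats 1000000 in
/-- Alikhanov's coercivity estimate: for any absolutely continuous `w` (encoded via the
fundamental theorem of calculus with integrable derivative `w'`) and `γ ∈ (0,1)`,
`w(t) · D_t^γ w(t) ≥ (1/2) · D_t^γ (w²)(t)` for a.e. `t ∈ (0,T)`.  Note that the
derivative of `w²` is `2 w w'`. -/
theorem alikhanov_coercivity (T γ : ℝ) (hT : 0 < T) (hγ : γ ∈ Set.Ioo (0:ℝ) 1)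
    (w w' : ℝ → ℝ)
    (hAC : ∀ t ∈ Set.Icc (0:ℝ) T, w t = w 0 + ∫ s in (0:ℝ)..t, w' s)
    (hint : IntervalIntegrable w' volume 0 T) :
    ∀ᵐ t ∂(volume.restrict (Set.Ioo (0:ℝ) T)),
      w t * caputoDeriv γ w' t ≥ (1/2) * caputoDeriv γ (fun s => 2 * w s * w' s) t := by
  obtain ⟨hγ0, hγ1⟩ := hγ
  have hc : 0 < (Real.Gamma (1 - γ))⁻¹ :=
    inv_pos.2 (Real.Gamma_pos_of_pos (by linarith))
  have hw'sm : AEStronglyMeasurable w' (volume.restrict (Ioc 0 T)) := hint.1.aestronglyMeasurable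
  set g : ℝ → ℝ := hw'sm.mk w' with hgdef
  have hgm : Measurable g := hw'sm.stronglyMeasurable_mk.measurable
  have hae : w' =ᵐ[volume.restrict (Ioc 0 T)] g := hw'sm.ae_eq_mk
  have hgi : IntegrableOn g (Ioc 0 T) := hint.1.congr hae
  have hgiIoo : IntegrableOn g (Ioo 0 T) := hgi.mono_set Ioo_subset_Ioc_self
  have haesub : ∀ t, t ≤ T → w' =ᵐ[volume.restrict (Ioc 0 t)] g := fun t htT =>
    ae_restrict_of_ae_restrict_of_subset (Ioc_subset_Ioc_right htT) hae
  -- continuous primitive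
  set W : ℝ → ℝ := fun s => w 0 + ∫ r in (0:ℝ)..s, g r with hWdef
  have hgIcc : IntegrableOn g (Icc 0 T) := by
    rw [integrableOn_Icc_iff_integrableOn_Ioo]; exact hgiIoo
  have hgIccu : IntegrableOn g (uIcc 0 T) := by rwa [uIcc_of_le hT.le]
  have hWcont : ContinuousOn W (Icc 0 T) := by
    have := intervalIntegral.continuousOn_primitive_interval (a := 0) (b := T) hgIccu
    rw [uIcc_of_le hT.le] at this
    exact continuousOn_const.add this
  have hWeq : ∀ s ∈ Icc (0:ℝ) T, w s = W s := by
    intro s hs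
    rw [hAC s hs, hWdef]
    have : (∫ r in (0:ℝ)..s, w' r) = ∫ r in (0:ℝ)..s, g r := by
      rw [intervalIntegral.integral_of_le hs.1, intervalIntegral.integral_of_le hs.1]
      exact integral_congr_ae (haesub s hs.2)
    rw [this]
  -- uniform bound for W
  set M : ℝ := |w 0| + ∫ r in Ioc (0:ℝ) T, |g r| with hMdef
  have hWbdd : ∀ s ∈ Icc (0:ℝ) T, |W s| ≤ M := by
    intro s hs
    have h1 : |∫ r in (0:ℝ)..s, g r| ≤ ∫ r in Ioc (0:ℝ) T, |g r| := by
      rw [intervalIntegral.integral_of_le hs.1]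
      have h2 : |∫ r in Ioc (0:ℝ) s, g r| ≤ ∫ r in Ioc (0:ℝ) s, |g r| := by
        simpa [Real.norm_eq_abs] using
          norm_integral_le_integral_norm (μ := volume.restrict (Ioc (0:ℝ) s)) g
      refine h2.trans ?_
      refine setIntegral_mono_set hgi.abs ?_ ?_
      · exact Filter.Eventually.of_forall fun r => abs_nonneg _
      · exact (Ioc_subset_Ioc_right hs.2).eventuallyLE
    calc |W s| ≤ |w 0| + |∫ r in (0:ℝ)..s, g r| := abs_add_le _ _
      _ ≤ M := by rw [hMdef]; linarith
  have key := ae_integrable T γ hT hγ0 hγ1 g hgm hgiIoo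
  filter_upwards [key, ae_restrict_mem measurableSet_Ioo] with t hkgt htmem
  obtain ⟨ht0, htT⟩ := htmem
  have hw'g : ∀ᵐ s ∂volume.restrict (Ioo 0 t), w' s = g s :=
    ae_restrict_of_ae_restrict_of_subset Ioo_subset_Ioc_self (haesub t htT.le)
  have hkmeas : Measurable fun s => (t - s) ^ (-γ) := by fun_prop
  -- rewrite both caputo integrals
  have hA : (∫ s in (0:ℝ)..t, (t - s) ^ (-γ) * w' s)
      = ∫ s in Ioo 0 t, (t - s) ^ (-γ) * g s := by
    rw [intervalIntegral.integral_of_le ht0.le, integral_Ioc_eq_integral_Ioo]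
    refine integral_congr_ae ?_
    filter_upwards [hw'g] with s hsg
    rw [hsg]
  have hB : (∫ s in (0:ℝ)..t, (t - s) ^ (-γ) * (2 * w s * w' s))
      = ∫ s in Ioo 0 t, (t - s) ^ (-γ) * (2 * W s * g s) := by
    rw [intervalIntegral.integral_of_le ht0.le, integral_Ioc_eq_integral_Ioo]
    refine integral_congr_ae ?_
    filter_upwards [hw'g, ae_restrict_mem measurableSet_Ioo] with s hsg hsmem
    rw [hsg, hWeq s ⟨hsmem.1.le, le_trans hsmem.2.le htT.le⟩]
  -- integrability of both integrands
  have hkg_nonneg : ∀ᵐ s ∂volume.restrict (Ioo 0 t), 0 ≤ (t - s) ^ (-γ) := by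
    rw [ae_restrict_iff' measurableSet_Ioo]
    filter_upwards with s hs
    exact Real.rpow_nonneg (by linarith [hs.2]) _
  have hI1 : IntegrableOn (fun s => (t - s) ^ (-γ) * g s) (Ioo 0 t) := by
    refine Integrable.mono' hkgt (hkmeas.aestronglyMeasurable.restrict.mul
      hgm.aestronglyMeasurable.restrict) ?_
    filter_upwards [hkg_nonneg] with s hk
    rw [Real.norm_eq_abs, abs_mul, abs_of_nonneg hk]
  have hWsub : AEStronglyMeasurable W (volume.restrict (Ioo 0 t)) := by
    have h1 : ContinuousOn W (Ioo 0 t) :=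
      hWcont.mono fun s hs => ⟨hs.1.le, le_trans hs.2.le htT.le⟩
    exact h1.aestronglyMeasurable measurableSet_Ioo
  have hI2 : IntegrableOn (fun s => (t - s) ^ (-γ) * (2 * W s * g s)) (Ioo 0 t) := by
    refine Integrable.mono' (hkgt.const_mul (2 * M))
      (hkmeas.aestronglyMeasurable.restrict.mul
        (((hWsub.const_mul 2).mul hgm.aestronglyMeasurable.restrict))) ?_
    rw [ae_restrict_iff' measurableSet_Ioo]
    filter_upwards with s hs
    have hk : (0:ℝ) ≤ (t - s) ^ (-γ) := Real.rpow_nonneg (by linarith [hs.2]) _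
    have hWb := hWbdd s ⟨hs.1.le, le_trans hs.2.le htT.le⟩
    rw [Real.norm_eq_abs, abs_mul, abs_of_nonneg hk, abs_mul, abs_mul]
    have : |(2:ℝ)| * |W s| * |g s| ≤ 2 * M * |g s| := by
      rw [abs_two]
      have : (2:ℝ) * |W s| ≤ 2 * M := by linarith
      exact mul_le_mul_of_nonneg_right this (abs_nonneg _)
    calc (t - s) ^ (-γ) * (|2| * |W s| * |g s|)
        ≤ (t - s) ^ (-γ) * (2 * M * |g s|) := mul_le_mul_of_nonneg_left this hk
      _ = 2 * M * ((t - s) ^ (-γ) * |g s|) := by ring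
  -- the key inequality
  have hwtW : w t = W t := hWeq t ⟨ht0.le, htT.le⟩
  have hWt_sub : ∀ᵐ s ∂volume.restrict (Ioo 0 t), s ∈ Ioo 0 t →
      W t - W s = ∫ r in Ioo s t, g r := by
    rw [ae_restrict_iff' measurableSet_Ioo]
    filter_upwards with s hs _
    have hi1 : IntervalIntegrable g volume 0 t :=
      (intervalIntegrable_iff_integrableOn_Ioc_of_le ht0.le).2
        (hgi.mono_set (Ioc_subset_Ioc_right htT.le))
    have hi2 : IntervalIntegrable g volume 0 s :=
      (intervalIntegrable_iff_integrableOn_Ioc_of_le hs.1.le).2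
        (hgi.mono_set (Ioc_subset_Ioc_right (le_trans hs.2.le htT.le)))
    rw [hWdef]
    simp only [add_sub_add_left_eq_sub]
    rw [intervalIntegral.integral_interval_sub_left hi1 hi2,
      intervalIntegral.integral_of_le hs.2.le, integral_Ioc_eq_integral_Ioo]
  have hdiffval : w t * (∫ s in Ioo 0 t, (t - s) ^ (-γ) * g s)
        - (1/2) * (∫ s in Ioo 0 t, (t - s) ^ (-γ) * (2 * W s * g s))
      = ∫ s in Ioo 0 t, (t - s) ^ (-γ) * g s * ((∫ r in Ioo s t, g r)) := by
    rw [← integral_const_mul (w t), ← integral_const_mul (1/2 : ℝ), ← integral_sub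
      (hI1.const_mul (w t)) (hI2.const_mul (1/2))]
    refine integral_congr_ae ?_
    filter_upwards [hWt_sub, ae_restrict_mem measurableSet_Ioo] with s hsub hsmem
    rw [← hsub hsmem, hwtW]
    ring
  have hcore := core_nonneg ht0 hγ0 hγ1 g hgm hkgt
  rw [← hdiffval] at hcore
  -- final algebra
  show (1/2) * caputoDeriv γ (fun s => 2 * w s * w' s) t ≤ w t * caputoDeriv γ w' t
  simp only [caputoDeriv]
  rw [hA, hB]
  set c := (Real.Gamma (1 - γ))⁻¹
  set A := ∫ s in Ioo 0 t, (t - s) ^ (-γ) * g s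
  set B := ∫ s in Ioo 0 t, (t - s) ^ (-γ) * (2 * W s * g s)
  have h2 : 0 ≤ c * (w t * A - 1/2 * B) := mul_nonneg hc.le hcore
  nlinarith [h2]
end

section
/- For τ > 0, ‖k_α - k_1‖_{L^1(0,T)} → 0 as α → 1⁻, where k_α(t) = τ^{-α} t^{α-1} E_{α,α}(-(t/τ)^α) and k_1(t) = τ^{-1} exp(-t/τ). -/
open MeasureTheory Set Filter

lemma gamma_lb {R : ℝ} (hR : 2 ≤ R) :
    ∃ δ : ℝ, 0 < δ ∧ ∀ x : ℝ, 1/2 ≤ x → δ * R ^ (x - R - 1) ≤ Real.Gamma x := by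
  have hR0 : (0:ℝ) < R := by linarith
  have hR1 : (1:ℝ) ≤ R := by linarith
  have hcont : ContinuousOn Real.Gamma (Icc (1/2 : ℝ) (R+1)) := fun x hx =>
    ((Real.differentiableAt_Gamma (fun m => by
      have : (0:ℝ) < x := by linarith [hx.1]
      have hm : -(m:ℝ) ≤ 0 := neg_nonpos.mpr (Nat.cast_nonneg m)
      linarith)).continuousAt).continuousWithinAt
  obtain ⟨x₀, hx₀, hmin⟩ := (isCompact_Icc (a := (1/2:ℝ)) (b := R+1)).exists_isMinOn
    (Set.nonempty_Icc.2 (by linarith)) hcont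
  refine ⟨Real.Gamma x₀, Real.Gamma_pos_of_pos (by linarith [hx₀.1]), ?_⟩
  set δ := Real.Gamma x₀ with hδdef
  have hδ : 0 < δ := Real.Gamma_pos_of_pos (by linarith [hx₀.1])
  have key : ∀ n : ℕ, ∀ x : ℝ, 1/2 ≤ x → x ≤ R + 1 + n →
      δ * R ^ (x - R - 1) ≤ Real.Gamma x := by
    intro n
    induction n with
    | zero =>
      intro x hx hx'
      push_cast at hx'
      have h1 : R ^ (x - R - 1) ≤ 1 :=
        Real.rpow_le_one_of_one_le_of_nonpos hR1 (by linarith)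
      calc δ * R ^ (x - R - 1) ≤ δ * 1 := by
            exact mul_le_mul_of_nonneg_left h1 hδ.le
        _ = δ := mul_one δ
        _ ≤ Real.Gamma x := hmin ⟨hx, by linarith⟩
    | succ n ih =>
      intro x hx hx'
      by_cases h : x ≤ R + 1 + n
      · exact ih x hx h
      push_neg at h
      have hn0 : (0:ℝ) ≤ n := Nat.cast_nonneg n
      have hx1 : (1:ℝ)/2 ≤ x - 1 := by linarith
      have hx2 : x - 1 ≤ R + 1 + n := by push_cast at hx'; linarith
      have hIH := ih (x-1) hx1 hx2
      have hne : x - 1 ≠ 0 := by linarith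
      have hgx : Real.Gamma x = (x - 1) * Real.Gamma (x - 1) := by
        have := Real.Gamma_add_one hne
        rw [sub_add_cancel] at this
        exact this
      have hpos : 0 ≤ δ * R ^ (x - 1 - R - 1) := by positivity
      have hsplit : R ^ (x - R - 1) = R ^ (x - 1 - R - 1) * R := by
        rw [← Real.rpow_add_one hR0.ne']
        ring_nf
      rw [hgx, hsplit]
      calc δ * (R ^ (x - 1 - R - 1) * R) = R * (δ * R ^ (x - 1 - R - 1)) := by ring
        _ ≤ (x - 1) * Real.Gamma (x - 1) := by
            apply mul_le_mul (by linarith) hIH hpos (by linarith)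
  intro x hx
  refine key ⌈x⌉₊ x hx ?_
  have := Nat.le_ceil x
  linarith

lemma exists_bound {m : ℝ} (hm : 0 ≤ m) :
    ∃ b : ℕ → ℝ, Summable b ∧ (∀ k, 0 ≤ b k) ∧ ∀ α : ℝ, 1/2 ≤ α → α ≤ 1 →
      ∀ z : ℝ, |z| ≤ m → ∀ k : ℕ, |z ^ k / Real.Gamma (α * k + α)| ≤ b k := by
  set R : ℝ := m^2 + 2 with hRdef
  have hR : 2 ≤ R := by nlinarith
  have hR0 : (0:ℝ) < R := by linarith
  have hR1 : (1:ℝ) ≤ R := by linarith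
  obtain ⟨δ, hδ, hΓ⟩ := gamma_lb hR
  set u : ℝ := R ^ ((1:ℝ)/2) with hudef
  have hu0 : 0 < u := Real.rpow_pos_of_pos hR0 _
  have hu2 : u ^ (2:ℕ) = R := by
    rw [hudef, ← Real.rpow_natCast (R ^ ((1:ℝ)/2)) 2, ← Real.rpow_mul hR0.le]
    norm_num
  have hmu : m < u := by
    by_contra hc
    push_neg at hc
    have : R ≤ m ^ 2 := by
      calc R = u ^ (2:ℕ) := hu2.symm
        _ ≤ m ^ (2:ℕ) := pow_le_pow_left₀ hu0.le hc 2
    linarith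
  set q : ℝ := m / u with hqdef
  have hq0 : 0 ≤ q := div_nonneg hm hu0.le
  have hq1 : q < 1 := (div_lt_one hu0).mpr hmu
  set C : ℝ := R ^ (R + 1) / (δ * u) with hCdef
  have hC0 : 0 ≤ C := by positivity
  refine ⟨fun k => C * q ^ k, (summable_geometric_of_lt_one hq0 hq1).mul_left C,
    fun k => by positivity, ?_⟩
  intro α hα1 hα2 z hz k
  have hx : (1:ℝ)/2 ≤ α * k + α := by
    have : (0:ℝ) ≤ (k:ℝ) := Nat.cast_nonneg k
    nlinarith
  have hΓpos : 0 < Real.Gamma (α * k + α) := Real.Gamma_pos_of_pos (by linarith)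
  -- lower bound on Gamma
  have hstep : δ * R ^ (((k:ℝ)+1)/2 - R - 1) ≤ Real.Gamma (α * k + α) := by
    refine le_trans ?_ (hΓ _ hx)
    apply mul_le_mul_of_nonneg_left _ hδ.le
    apply Real.rpow_le_rpow_of_exponent_le hR1
    have : (0:ℝ) ≤ (k:ℝ) := Nat.cast_nonneg k
    nlinarith
  have hden : R ^ (((k:ℝ)+1)/2 - R - 1) = u ^ (k+1) * (R ^ (R + 1))⁻¹ := by
    rw [show ((k:ℝ)+1)/2 - R - 1 = (1/2) * ((k:ℕ)+1:ℕ) + (-(R+1)) by push_cast; ring,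
      Real.rpow_add hR0, Real.rpow_neg hR0.le, Real.rpow_mul hR0.le, Real.rpow_natCast]
  have habs : |z ^ k / Real.Gamma (α * k + α)| = |z| ^ k / Real.Gamma (α * k + α) := by
    rw [abs_div, abs_pow, abs_of_pos hΓpos]
  rw [habs]
  have h1 : |z| ^ k / Real.Gamma (α * k + α) ≤ m ^ k / (δ * R ^ (((k:ℝ)+1)/2 - R - 1)) := by
    apply div_le_div₀ (by positivity) (pow_le_pow_left₀ (abs_nonneg z) hz k) (by positivity) hstep
  refine h1.trans_eq ?_
  show _ = C * q ^ k
  have hqk : q ^ k = m ^ k / u ^ k := by rw [hqdef, div_pow]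
  rw [hden, hCdef, hqk, pow_succ]
  have hRp : (0:ℝ) < R ^ (R+1) := Real.rpow_pos_of_pos hR0 _
  field_simp

/-- The two-parameter Mittag-Leffler function `E_{a,b}(z) = Σ_{k≥0} z^k / Γ(ak+b)`. -/
noncomputable def mittagLeffler (a b z : ℝ) : ℝ :=
  ∑' k : ℕ, z ^ k / Real.Gamma (a * k + b)

/-- The kernel `k_α(t) = τ^{-α} t^{α-1} E_{α,α}(-(t/τ)^α)`. -/
noncomputable def mlKernel (α τ t : ℝ) : ℝ :=
  τ ^ (-α) * t ^ (α - 1) * mittagLeffler α α (-((t / τ) ^ α))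

/-- `‖k_α - k_1‖_{L¹(0,T)} → 0` as `α → 1⁻`, where `k_1(t) = τ⁻¹ exp(-t/τ)`. -/
theorem mlKernel_L1_limit (T τ : ℝ) (hT : 0 < T) (hτ : 0 < τ) :
    Filter.Tendsto
      (fun α : ℝ => ∫ t in (0:ℝ)..T, |mlKernel α τ t - τ⁻¹ * Real.exp (-(t / τ))|)
      (nhdsWithin 1 (Set.Iio (1:ℝ))) (nhds 0) := by
  set m : ℝ := max (T / τ) 1 with hmdef
  have hm1 : (1:ℝ) ≤ m := le_max_right _ _
  have hm0 : (0:ℝ) ≤ m := by linarith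
  obtain ⟨b, hb_sum, hb0, hb⟩ := exists_bound hm0
  set S : ℝ := ∑' k, b k with hSdef
  have hS0 : 0 ≤ S := tsum_nonneg hb0
  set c₁ : ℝ := τ⁻¹ + τ ^ (-(1/2) : ℝ) with hc₁def
  have hc₁0 : 0 ≤ c₁ := by positivity
  -- base continuity helper
  have hbasecont : ∀ c : ℝ, 0 < c → Continuous fun α : ℝ => c ^ α := by
    intro c hc
    simp only [Real.rpow_def_of_pos hc]
    exact Real.continuous_exp.comp (continuous_const.mul continuous_id)
  -- |z| ≤ m for the ML argument
  have hzb : ∀ α : ℝ, 0 ≤ α → α ≤ 1 → ∀ t : ℝ, t ∈ Ioc 0 T → |(-((t/τ)^α))| ≤ m := by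
    intro α hα0 hα1 t ht
    have hx0 : 0 < t / τ := div_pos ht.1 hτ
    rw [abs_neg, abs_of_nonneg (Real.rpow_nonneg hx0.le α)]
    rcases le_or_gt (t/τ) 1 with h | h
    · exact le_trans (Real.rpow_le_one hx0.le h hα0) hm1
    · calc (t/τ) ^ α ≤ (t/τ) ^ (1:ℝ) :=
            Real.rpow_le_rpow_of_exponent_le h.le hα1
        _ = t/τ := Real.rpow_one _
        _ ≤ T/τ := by gcongr; exact ht.2
        _ ≤ m := le_max_left _ _
  -- bound on the ML factor
  have hMLb : ∀ α : ℝ, 1/2 ≤ α → α ≤ 1 → ∀ t : ℝ, t ∈ Ioc 0 T →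
      |mittagLeffler α α (-((t/τ)^α))| ≤ S := by
    intro α hα1 hα2 t ht
    have habs_k : ∀ k : ℕ, |(-((t/τ)^α)) ^ k / Real.Gamma (α * k + α)| ≤ b k :=
      fun k => hb α hα1 hα2 _ (hzb α (by linarith) hα2 t ht) k
    have hsum : Summable fun k : ℕ => |(-((t/τ)^α)) ^ k / Real.Gamma (α * k + α)| :=
      hb_sum.of_nonneg_of_le (fun k => abs_nonneg _) habs_k
    have hnorm := norm_tsum_le_tsum_norm
      (f := fun k : ℕ => (-((t/τ)^α)) ^ k / Real.Gamma (α * k + α))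
      (by simpa only [Real.norm_eq_abs] using hsum)
    simp only [Real.norm_eq_abs] at hnorm
    calc |mittagLeffler α α (-((t/τ)^α))|
        = |∑' k : ℕ, (-((t/τ)^α)) ^ k / Real.Gamma (α * k + α)| := rfl
      _ ≤ ∑' k : ℕ, |(-((t/τ)^α)) ^ k / Real.Gamma (α * k + α)| := hnorm
      _ ≤ S := Summable.tsum_le_tsum habs_k hsum hb_sum
  -- bound on the kernel
  have hKb : ∀ α : ℝ, 1/2 ≤ α → α ≤ 1 → ∀ t : ℝ, t ∈ Ioc 0 T →
      |mlKernel α τ t| ≤ c₁ * (t ^ (-(1/2) : ℝ) + 1) * S := by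
    intro α hα1 hα2 t ht
    have ht0 : 0 < t := ht.1
    have h1 : τ ^ (-α) ≤ c₁ := by
      rcases le_or_gt τ 1 with h | h
      · have : τ ^ (-α) ≤ τ ^ (-1 : ℝ) :=
          Real.rpow_le_rpow_of_exponent_ge hτ h (by linarith)
        rw [Real.rpow_neg_one] at this
        have h2 : (0:ℝ) ≤ τ ^ (-(1/2):ℝ) := Real.rpow_nonneg hτ.le _
        rw [hc₁def]; linarith
      · have : τ ^ (-α) ≤ τ ^ (-(1/2) : ℝ) :=
          Real.rpow_le_rpow_of_exponent_le h.le (by linarith)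
        have h2 : (0:ℝ) ≤ τ⁻¹ := by positivity
        rw [hc₁def]; linarith
    have h2 : t ^ (α - 1) ≤ t ^ (-(1/2) : ℝ) + 1 := by
      rcases le_or_gt t 1 with h | h
      · have : t ^ (α-1) ≤ t ^ (-(1/2) : ℝ) :=
          Real.rpow_le_rpow_of_exponent_ge ht0 h (by linarith)
        linarith
      · have : t ^ (α-1) ≤ t ^ (0 : ℝ) :=
          Real.rpow_le_rpow_of_exponent_le h.le (by linarith)
        rw [Real.rpow_zero] at this
        have h2 : (0:ℝ) ≤ t ^ (-(1/2):ℝ) := Real.rpow_nonneg ht0.le _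
        linarith
    have h3 := hMLb α hα1 hα2 t ht
    have hp1 : (0:ℝ) < τ ^ (-α) := Real.rpow_pos_of_pos hτ _
    have hp2 : (0:ℝ) < t ^ (α-1) := Real.rpow_pos_of_pos ht0 _
    calc |mlKernel α τ t| = τ ^ (-α) * t ^ (α-1) * |mittagLeffler α α (-((t/τ)^α))| := by
          rw [mlKernel, abs_mul, abs_mul, abs_of_pos hp1, abs_of_pos hp2]
      _ ≤ c₁ * (t ^ (-(1/2) : ℝ) + 1) * S := by
          apply mul_le_mul (mul_le_mul h1 h2 hp2.le hc₁0) h3 (abs_nonneg _)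
          positivity
  -- pointwise convergence
  have hpt : ∀ t : ℝ, t ∈ Ioc 0 T →
      Tendsto (fun α : ℝ => |mlKernel α τ t - τ⁻¹ * Real.exp (-(t/τ))|)
        (nhdsWithin 1 (Set.Iio (1:ℝ))) (nhds 0) := by
    intro t ht
    have ht0 : 0 < t := ht.1
    have hx0 : 0 < t / τ := div_pos ht0 hτ
    have h1 : Tendsto (fun α : ℝ => τ ^ (-α)) (nhds 1) (nhds τ⁻¹) := by
      have := ((hbasecont τ hτ).comp continuous_neg).tendsto (1:ℝ)
      simpa [Function.comp_def, Real.rpow_neg_one] using this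
    have h2 : Tendsto (fun α : ℝ => t ^ (α - 1)) (nhds 1) (nhds 1) := by
      have hsub : Continuous fun α : ℝ => α - 1 := continuous_id.sub continuous_const
      have := ((hbasecont t ht0).comp hsub).tendsto (1:ℝ)
      simpa [Function.comp_def] using this
    have hexp : Real.exp (-(t/τ)) = ∑' k : ℕ, (-(t/τ)) ^ k / Real.Gamma ((k:ℝ) + 1) := by
      rw [Real.exp_eq_exp_ℝ, NormedSpace.exp_eq_tsum_div]
      exact tsum_congr fun k => by rw [Real.Gamma_nat_eq_factorial]
    have h3 : Tendsto (fun α : ℝ => mittagLeffler α α (-((t/τ)^α)))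
        (nhdsWithin 1 (Set.Iio (1:ℝ))) (nhds (Real.exp (-(t/τ)))) := by
      simp only [mittagLeffler]
      rw [hexp]
      apply tendsto_tsum_of_dominated_convergence hb_sum
      · intro k
        have hnum : Tendsto (fun α : ℝ => (-((t/τ) ^ α)) ^ k) (nhds 1)
            (nhds ((-(t/τ)) ^ k)) := by
          have := (((hbasecont (t/τ) hx0).neg).pow k).tendsto (1:ℝ)
          simpa [Real.rpow_one, Pi.pow_def, Pi.neg_def] using this
        have hg : ContinuousAt Real.Gamma ((k:ℝ) + 1) := by
          apply (Real.differentiableAt_Gamma (fun n => ?_)).continuousAt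
          have h1 : (0:ℝ) < (k:ℝ) + 1 := by positivity
          have h2 : -(n:ℝ) ≤ 0 := neg_nonpos.mpr (Nat.cast_nonneg n)
          exact ne_of_gt (lt_of_le_of_lt h2 h1)
        have hl : Tendsto (fun α : ℝ => α * k + α) (nhds 1) (nhds ((k:ℝ) + 1)) := by
          have hc : Continuous fun α : ℝ => α * k + α :=
            (continuous_id.mul continuous_const).add continuous_id
          have := hc.tendsto (1:ℝ)
          simpa using this
        have hden : Tendsto (fun α : ℝ => Real.Gamma (α * k + α)) (nhds 1)
            (nhds (Real.Gamma ((k:ℝ) + 1))) := hg.tendsto.comp hl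
        have hne : Real.Gamma ((k:ℝ) + 1) ≠ 0 :=
          (Real.Gamma_pos_of_pos (by positivity)).ne'
        exact ((hnum.div hden hne).mono_left nhdsWithin_le_nhds)
      · filter_upwards [Ioo_mem_nhdsLT_of_mem
          (show (1:ℝ) ∈ Ioc (1/2 : ℝ) 1 from ⟨by norm_num, le_refl _⟩)] with α hα
        intro k
        rw [Real.norm_eq_abs]
        exact hb α hα.1.le hα.2.le _ (hzb α (by linarith [hα.1]) hα.2.le t ht) k
    have hml : Tendsto (fun α : ℝ => mlKernel α τ t)
        (nhdsWithin 1 (Set.Iio (1:ℝ))) (nhds (τ⁻¹ * Real.exp (-(t/τ)))) := by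
      have := ((h1.mono_left nhdsWithin_le_nhds).mul
        (h2.mono_left nhdsWithin_le_nhds)).mul h3
      simpa [mlKernel] using this
    have habs := (hml.sub (tendsto_const_nhds
      (x := τ⁻¹ * Real.exp (-(t/τ))) (f := nhdsWithin 1 (Set.Iio (1:ℝ))))).abs
    simpa using habs
  -- conclude by dominated convergence
  have h00 : (∫ t in Ioc (0:ℝ) T, (0:ℝ)) = 0 := integral_zero _ _
  simp_rw [intervalIntegral.integral_of_le hT.le]
  have key : Tendsto (fun α : ℝ => ∫ t in Ioc (0:ℝ) T, |mlKernel α τ t - τ⁻¹ * Real.exp (-(t/τ))|)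
      (nhdsWithin 1 (Set.Iio (1:ℝ))) (nhds (∫ t in Ioc (0:ℝ) T, (0:ℝ))) := by
    apply tendsto_integral_filter_of_dominated_convergence
      (bound := fun t => c₁ * (t ^ (-(1/2) : ℝ) + 1) * S + τ⁻¹)
    · -- measurability
      filter_upwards [Ioo_mem_nhdsLT_of_mem
        (show (1:ℝ) ∈ Ioc (1/2 : ℝ) 1 from ⟨by norm_num, le_refl _⟩)] with α hα
      have hα1 : 1/2 ≤ α := hα.1.le
      have hα2 : α ≤ 1 := hα.2.le
      have hc2 : ContinuousOn (fun t : ℝ => -((t/τ) ^ α)) (Ioc 0 T) := by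
        apply ContinuousOn.neg
        apply ContinuousOn.rpow_const (continuousOn_id.div_const τ)
        intro x hx
        exact Or.inl (div_ne_zero hx.1.ne' hτ.ne')
      have hcML : ContinuousOn (fun t : ℝ =>
          ∑' k : ℕ, (-((t/τ) ^ α)) ^ k / Real.Gamma (α * k + α)) (Ioc 0 T) := by
        apply continuousOn_tsum (u := b) (fun k => (hc2.pow k).div_const _) hb_sum
        intro k t htt
        rw [Real.norm_eq_abs]
        exact hb α hα1 hα2 _ (hzb α (by linarith) hα2 t htt) k
      have hc1 : ContinuousOn (fun t : ℝ => t ^ (α - 1)) (Ioc 0 T) := fun x hx =>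
        (Real.continuousAt_rpow_const x _ (Or.inl hx.1.ne')).continuousWithinAt
      have hK : ContinuousOn (fun t : ℝ => mlKernel α τ t) (Ioc 0 T) := by
        simp only [mlKernel, mittagLeffler]
        exact (continuousOn_const.mul hc1).mul hcML
      have hE : Continuous (fun t : ℝ => τ⁻¹ * Real.exp (-(t/τ))) := by
        exact continuous_const.mul (Real.continuous_exp.comp (continuous_id.div_const τ).neg)
      exact ((hK.sub hE.continuousOn).abs).aestronglyMeasurable measurableSet_Ioc
    · -- bound
      filter_upwards [Ioo_mem_nhdsLT_of_mem
        (show (1:ℝ) ∈ Ioc (1/2 : ℝ) 1 from ⟨by norm_num, le_refl _⟩)] with α hα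
      refine (ae_restrict_mem measurableSet_Ioc).mono fun t htt => ?_
      have hE : |τ⁻¹ * Real.exp (-(t/τ))| ≤ τ⁻¹ := by
        rw [abs_mul, abs_of_nonneg (by positivity : (0:ℝ) ≤ τ⁻¹),
          abs_of_pos (Real.exp_pos _)]
        have : Real.exp (-(t/τ)) ≤ 1 :=
          Real.exp_le_one_iff.2 (neg_nonpos.mpr (div_nonneg htt.1.le hτ.le))
        exact mul_le_of_le_one_right (by positivity) this
      calc ‖|mlKernel α τ t - τ⁻¹ * Real.exp (-(t/τ))|‖
          = |mlKernel α τ t - τ⁻¹ * Real.exp (-(t/τ))| := by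
            rw [Real.norm_eq_abs, abs_abs]
        _ ≤ |mlKernel α τ t| + |τ⁻¹ * Real.exp (-(t/τ))| := abs_sub _ _
        _ ≤ c₁ * (t ^ (-(1/2) : ℝ) + 1) * S + τ⁻¹ :=
            add_le_add (hKb α hα.1.le hα.2.le t htt) hE
    · -- integrability of bound
      have hrpow : IntegrableOn (fun t : ℝ => t ^ (-(1/2) : ℝ)) (Ioc (0:ℝ) T) := by
        rw [← intervalIntegrable_iff_integrableOn_Ioc_of_le hT.le]
        exact intervalIntegral.intervalIntegrable_rpow' (by norm_num)
      have h1 : IntegrableOn (fun t : ℝ => t ^ (-(1/2) : ℝ) + 1) (Ioc (0:ℝ) T) :=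
        hrpow.add (integrableOn_const measure_Ioc_lt_top.ne)
      exact ((h1.const_mul c₁).mul_const S).add (integrableOn_const measure_Ioc_lt_top.ne)
    · -- ae pointwise limit
      exact (ae_restrict_mem measurableSet_Ioc).mono hpt
  rw [h00] at key
  exact key
end
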